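/- Let 1 < α < 2, h > 0, λ ≥ 0, and let γ₁, γ₂, γ₃ be arbitrary real numbers. Then the series ∑_{m=0}^{∞} g_m^{(α)} converges and ∑_{m=0}^{∞} g_m^{(α)} = (γ₁ e^{hλ} + γ₂ + γ₃ e^{−hλ}) (1 − e^{−hλ})^{α}. -/

import Mathlib

/-- Normalized Grünwald weights `w_k^{(α)} = (-1)^k (α choose k)`. -/
noncomputable def wgt (α : ℝ) (k : ℕ) : ℝ :=
  (-1 : ℝ) ^ k * (∏ i ∈ Finset.range k, (α - i)) / (Nat.factorial k)

lemma wgt_zero (α : ℝ) : wgt α 0 = 1 := by simp [wgt]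
lemma wgt_one (α : ℝ) : wgt α 1 = -α := by simp [wgt]

lemma wgt_succ (α : ℝ) (n : ℕ) :
    wgt α (n + 1) * (n + 1) = wgt α n * ((n : ℝ) - α) := by
  have hf : (Nat.factorial n : ℝ) ≠ 0 := by exact_mod_cast (Nat.factorial_pos n).ne'
  have hf1 : ((n : ℝ) + 1) ≠ 0 := by positivity
  simp only [wgt, Finset.prod_range_succ, Nat.factorial_succ, pow_succ]
  push_cast
  field_simp
  ring

lemma wgt_succ' (α : ℝ) (n : ℕ) :
    wgt α (n + 1) = wgt α n * ((n : ℝ) - α) / (n + 1) := by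
  have hf1 : ((n : ℝ) + 1) ≠ 0 := by positivity
  field_simp
  exact wgt_succ α n

lemma wgt_two (α : ℝ) : wgt α 2 = α * (α - 1) / 2 := by
  rw [show (2 : ℕ) = 1 + 1 from rfl, wgt_succ', wgt_one]
  push_cast; ring

/-- bound for `0 < β < 1`: `|wgt β (n+1)| ≤ β / (n+1)`. -/
lemma wgt_abs_le_beta {β : ℝ} (hβ0 : 0 < β) (hβ1 : β < 1) (n : ℕ) :
    |wgt β (n + 1)| ≤ β / (n + 1) := by
  induction n with
  | zero => simp [wgt_one, abs_of_pos hβ0]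
  | succ n ih =>
      have hn : (0:ℝ) < (n:ℝ) + 1 := by positivity
      have hn2 : (0:ℝ) < (n:ℝ) + 1 + 1 := by positivity
      have hb : (0:ℝ) ≤ ((n:ℝ) + 1) - β := by nlinarith
      have e2 : |((n:ℝ)+1+1)| = (n:ℝ)+1+1 := abs_of_pos hn2
      have key : |wgt β (n + 1 + 1)| = |wgt β (n+1)| * (((n:ℝ)+1) - β) / ((n:ℝ)+1+1) := by
        rw [wgt_succ', abs_div, abs_mul]
        push_cast
        rw [abs_of_nonneg hb, e2]
      rw [key]
      have h1 : |wgt β (n+1)| * (((n:ℝ)+1) - β) ≤ (β / ((n:ℝ)+1)) * (((n:ℝ)+1) - β) :=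
        mul_le_mul_of_nonneg_right ih hb
      have h2 : (β / ((n:ℝ)+1)) * (((n:ℝ)+1) - β) ≤ β := by
        rw [div_mul_eq_mul_div, div_le_iff₀ hn]
        nlinarith
      have h3 : |wgt β (n+1)| * (((n:ℝ)+1) - β) / ((n:ℝ)+1+1) ≤ β / ((n:ℝ)+1+1) := by
        gcongr
        linarith
      push_cast
      exact h3

/-- bound for `1 < α < 2`: `|wgt α (n+2)| ≤ α(α-1)/((n+2)(n+1))`. -/
lemma wgt_abs_le_alpha {α : ℝ} (hα1 : 1 < α) (hα2 : α < 2) (n : ℕ) :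
    |wgt α (n + 2)| ≤ α * (α - 1) / (((n:ℝ) + 2) * ((n:ℝ) + 1)) := by
  induction n with
  | zero =>
      rw [wgt_two, abs_of_nonneg (by nlinarith)]
      norm_num
  | succ n ih =>
      have hn : (0:ℝ) < (n:ℝ) + 1 := by positivity
      have hn2 : (0:ℝ) < (n:ℝ) + 2 := by positivity
      have hn3 : (0:ℝ) < (n:ℝ) + 2 + 1 := by positivity
      have hb : (0:ℝ) ≤ ((n:ℝ) + 2) - α := by nlinarith
      have key : |wgt α (n + 1 + 2)| = |wgt α (n+2)| * (((n:ℝ)+2) - α) / ((n:ℝ)+2+1) := by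
        have : n + 1 + 2 = (n + 2) + 1 := by ring
        rw [this, wgt_succ', abs_div, abs_mul]
        push_cast
        rw [abs_of_nonneg hb, abs_of_pos hn3]
      rw [key]
      have h1 : |wgt α (n+2)| * (((n:ℝ)+2) - α)
          ≤ (α * (α - 1) / (((n:ℝ)+2)*((n:ℝ)+1))) * (((n:ℝ)+2) - α) :=
        mul_le_mul_of_nonneg_right ih hb
      have h2 : (α * (α - 1) / (((n:ℝ)+2)*((n:ℝ)+1))) * (((n:ℝ)+2) - α)
          ≤ α * (α - 1) / ((n:ℝ)+2) := by
        rw [div_mul_eq_mul_div, div_le_div_iff₀ (by positivity) hn2]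
        have hpos : (0:ℝ) < α * (α - 1) * ((n:ℝ)+2) :=
          mul_pos (mul_pos (by linarith) (by linarith)) hn2
        have hle : ((n:ℝ)+2) - α ≤ (n:ℝ)+1 := by linarith
        nlinarith [mul_le_mul_of_nonneg_left hle hpos.le]
      have h3 : |wgt α (n+2)| * (((n:ℝ)+2) - α) / ((n:ℝ)+2+1)
          ≤ (α * (α - 1) / ((n:ℝ)+2)) / ((n:ℝ)+2+1) := by
        gcongr
        linarith
      refine h3.trans ?_
      rw [div_div]
      push_cast
      apply le_of_eq
      ring_nf

lemma wgt_abs_le_two' {α : ℝ} (hα1 : 1 < α) (hα2 : α < 2) (n : ℕ) :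
    |wgt α n| ≤ 2 := by
  match n with
  | 0 => rw [wgt_zero]; norm_num
  | 1 => rw [wgt_one, abs_neg, abs_of_pos (by linarith)]; linarith
  | (n+2) =>
      refine (wgt_abs_le_alpha hα1 hα2 n).trans ?_
      have hn : (0:ℝ) < ((n:ℝ)+2)*((n:ℝ)+1) := by positivity
      rw [div_le_iff₀ hn]
      nlinarith [Nat.cast_nonneg (α := ℝ) n]

lemma wgt_mul_n_le {α : ℝ} (hα1 : 1 < α) (hα2 : α < 2) (n : ℕ) :
    (n:ℝ) * |wgt α n| ≤ 2 := by
  match n with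
  | 0 => simp
  | 1 => rw [wgt_one, abs_neg, abs_of_pos (by linarith)]; push_cast; linarith
  | (n+2) =>
      have h := wgt_abs_le_alpha hα1 hα2 n
      have hn : (0:ℝ) < (n:ℝ)+1 := by positivity
      have hn2 : (0:ℝ) < (n:ℝ)+2 := by positivity
      have : ((n:ℝ)+2) * |wgt α (n+2)| ≤ ((n:ℝ)+2) * (α * (α-1) / (((n:ℝ)+2)*((n:ℝ)+1))) :=
        mul_le_mul_of_nonneg_left h hn2.le
      push_cast
      refine this.trans ?_
      have hsimp : ((n:ℝ)+2) * (α * (α - 1) / (((n:ℝ)+2)*((n:ℝ)+1)))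
          = α * (α - 1) / ((n:ℝ)+1) := by field_simp
      rw [hsimp, div_le_iff₀ hn]
      nlinarith [Nat.cast_nonneg (α := ℝ) n]

lemma summable_wgt_mul_pow {α x : ℝ} (hα1 : 1 < α) (hα2 : α < 2) (hx : |x| ≤ 1) :
    Summable (fun n : ℕ => wgt α n * x ^ n) := by
  have hbase : Summable (fun n : ℕ => 2 / ((n:ℝ)+1)^2) := by
    have h1 : Summable (fun n : ℕ => 1 / ((n:ℝ))^2) := Real.summable_one_div_nat_pow.mpr (by norm_num)
    have h2 : Summable (fun n : ℕ => 1 / ((n:ℝ)+1)^2) := by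
      have := (summable_nat_add_iff 1).mpr h1
      refine this.congr fun n => ?_
      push_cast
      ring_nf
    simpa [div_eq_mul_inv, mul_comm] using h2.mul_left 2
  rw [← summable_nat_add_iff 2]
  apply Summable.of_norm
  refine hbase.of_nonneg_of_le (fun n => norm_nonneg _) (fun n => ?_)
  have h1 : ‖wgt α (n+2) * x ^ (n+2)‖ ≤ |wgt α (n+2)| := by
    rw [norm_mul, Real.norm_eq_abs, Real.norm_eq_abs, abs_pow]
    calc |wgt α (n+2)| * |x| ^ (n+2) ≤ |wgt α (n+2)| * 1 :=
          mul_le_mul_of_nonneg_left (pow_le_one₀ (abs_nonneg x) hx) (abs_nonneg _)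
      _ = |wgt α (n+2)| := mul_one _
  refine h1.trans ((wgt_abs_le_alpha hα1 hα2 n).trans ?_)
  have hn : (0:ℝ) < (n:ℝ)+1 := by positivity
  have hn2 : (0:ℝ) < (n:ℝ)+2 := by positivity
  rw [div_le_div_iff₀ (by positivity) (by positivity)]
  have ha : α * (α - 1) ≤ 2 := by nlinarith
  have hsq : ((n:ℝ)+1)^2 ≤ ((n:ℝ)+2)*((n:ℝ)+1) := by nlinarith
  nlinarith [mul_le_mul ha hsq (by positivity) (by norm_num : (0:ℝ) ≤ 2)]

lemma summable_two_mul_geom {r : ℝ} (hr0 : 0 < r) (hr1 : r < 1) :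
    Summable (fun n : ℕ => 2 * r ^ (n - 1)) := by
  rw [← summable_nat_add_iff 1]
  have h : Summable (fun n : ℕ => 2 * r ^ n) :=
    (summable_geometric_of_lt_one hr0.le hr1).mul_left 2
  refine h.congr fun n => ?_
  simp

lemma deriv_norm_bound {α : ℝ} (hα1 : 1 < α) (hα2 : α < 2) {r : ℝ} (hr0 : 0 < r)
    {z : ℝ} (hz : |z| ≤ r) (n : ℕ) :
    ‖wgt α n * ((n:ℝ) * z ^ (n - 1))‖ ≤ 2 * r ^ (n - 1) := by
  rw [Real.norm_eq_abs, abs_mul, abs_mul, abs_pow, Nat.abs_cast]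
  have h1 : |z| ^ (n-1) ≤ r ^ (n-1) := pow_le_pow_left₀ (abs_nonneg z) hz _
  calc |wgt α n| * ((n:ℝ) * |z| ^ (n-1))
      ≤ |wgt α n| * ((n:ℝ) * r ^ (n-1)) := by
        apply mul_le_mul_of_nonneg_left _ (abs_nonneg _)
        exact mul_le_mul_of_nonneg_left h1 (Nat.cast_nonneg n)
    _ = ((n:ℝ) * |wgt α n|) * r ^ (n-1) := by ring
    _ ≤ 2 * r ^ (n-1) :=
        mul_le_mul_of_nonneg_right (wgt_mul_n_le hα1 hα2 n) (by positivity)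

lemma summable_deriv_series {α : ℝ} (hα1 : 1 < α) (hα2 : α < 2) {y : ℝ} (hy : |y| < 1) :
    Summable (fun n : ℕ => wgt α n * ((n:ℝ) * y ^ (n - 1))) := by
  set r : ℝ := (|y| + 1) / 2 with hr
  have hr0 : 0 < r := by positivity
  have hr1 : r < 1 := by rw [hr]; linarith
  have hyr : |y| ≤ r := by rw [hr]; linarith
  exact Summable.of_norm <| (summable_two_mul_geom hr0 hr1).of_nonneg_of_le
    (fun n => norm_nonneg _) (fun n => deriv_norm_bound hα1 hα2 hr0 hyr n)

lemma hasDerivAt_F {α : ℝ} (hα1 : 1 < α) (hα2 : α < 2) {y : ℝ} (hy : |y| < 1) :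
    HasDerivAt (fun z => ∑' n : ℕ, wgt α n * z ^ n)
      (∑' n : ℕ, wgt α n * ((n:ℝ) * y ^ (n - 1))) y := by
  set r : ℝ := (|y| + 1) / 2 with hr
  have hr0 : 0 < r := by positivity
  have hr1 : r < 1 := by rw [hr]; linarith
  have hyr : |y| < r := by rw [hr]; linarith
  apply hasDerivAt_tsum_of_isPreconnected
    (summable_two_mul_geom hr0 hr1) Metric.isOpen_ball
    (convex_ball (0:ℝ) r).isPreconnected
    (g := fun n z => wgt α n * z ^ n)
    (g' := fun n z => wgt α n * ((n:ℝ) * z ^ (n - 1)))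
    (y₀ := 0)
  · intro n z _
    exact (hasDerivAt_pow n z).const_mul (wgt α n)
  · intro n z hz
    rw [Metric.mem_ball, Real.dist_eq, sub_zero] at hz
    exact deriv_norm_bound hα1 hα2 hr0 hz.le n
  · rwa [Metric.mem_ball, dist_self]
  · apply summable_of_ne_finset_zero (s := {0})
    intro n hn
    simp only [Finset.mem_singleton] at hn
    rw [zero_pow hn, mul_zero]
  · rwa [Metric.mem_ball, Real.dist_eq, sub_zero]

lemma ode_identity {α : ℝ} (hα1 : 1 < α) (hα2 : α < 2) {y : ℝ} (hy : |y| < 1) :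
    (1 - y) * (∑' n : ℕ, wgt α n * ((n:ℝ) * y ^ (n - 1)))
      = -α * (∑' n : ℕ, wgt α n * y ^ n) := by
  set d : ℕ → ℝ := fun n => wgt α n * ((n:ℝ) * y ^ (n - 1)) with hd
  set D : ℝ := ∑' n, d n with hD
  have hsumd : Summable d := summable_deriv_series hα1 hα2 hy
  have hDsum : HasSum d D := hsumd.hasSum
  have hFsum : HasSum (fun n : ℕ => wgt α n * y ^ n) (∑' n : ℕ, wgt α n * y ^ n) :=
    (summable_wgt_mul_pow hα1 hα2 hy.le).hasSum
  set F : ℝ := ∑' n : ℕ, wgt α n * y ^ n with hF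
  -- shifted series
  have hshift : HasSum (fun n => d (n + 1)) D := by
    have h0 : d 0 = 0 := by simp [hd]
    refine (hasSum_nat_add_iff (f := d) 1).mpr ?_
    convert hDsum using 1
    · rfl
    simp [h0]
  have hpt : ∀ n : ℕ, d (n + 1) = ((n : ℝ) - α) * (wgt α n * y ^ n) := by
    intro n
    have h := wgt_succ α n
    simp only [hd, Nat.add_sub_cancel]
    push_cast
    have e : wgt α (n+1) * (((n:ℝ)+1) * y ^ n) = (wgt α (n+1) * ((n:ℝ)+1)) * y ^ n := by ring
    rw [e, h]
    ring
  have h1 : HasSum (fun n : ℕ => ((n : ℝ) - α) * (wgt α n * y ^ n)) D := by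
    have h2 := hshift
    simp only [hpt] at h2
    exact h2
  have h3 : HasSum (fun n : ℕ => (n : ℝ) * (wgt α n * y ^ n)) (y * D) := by
    have h2 := hDsum.mul_left y
    have he : (fun n : ℕ => y * d n) = fun n : ℕ => (n:ℝ) * (wgt α n * y ^ n) := by
      funext n
      cases n with
      | zero => simp [hd]
      | succ m =>
          simp only [hd, Nat.add_sub_cancel]
          push_cast
          rw [pow_succ]
          ring
    rwa [he] at h2
  have h4 : HasSum (fun n : ℕ => -α * (wgt α n * y ^ n)) (-α * F) := hFsum.mul_left (-α)
  have h5 : HasSum (fun n : ℕ => ((n : ℝ) - α) * (wgt α n * y ^ n)) (y * D + -α * F) := by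
    have h6 := h3.add h4
    have he : (fun n : ℕ => (n:ℝ) * (wgt α n * y ^ n) + -α * (wgt α n * y ^ n))
        = fun n : ℕ => ((n : ℝ) - α) * (wgt α n * y ^ n) := by
      funext n; ring
    rwa [he] at h6
  have huniq : D = y * D + -α * F := h1.unique h5
  linarith

lemma F_zero (α : ℝ) : (∑' n : ℕ, wgt α n * (0:ℝ) ^ n) = 1 := by
  rw [tsum_eq_single 0]
  · simp [wgt_zero]
  · intro n hn
    rw [zero_pow hn, mul_zero]

lemma binom_hasSum_lt {α x : ℝ} (hα1 : 1 < α) (hα2 : α < 2)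
    (hx0 : 0 < x) (hx1 : x < 1) :
    HasSum (fun n : ℕ => wgt α n * x ^ n) ((1 - x) ^ α) := by
  set F : ℝ → ℝ := fun z => ∑' n : ℕ, wgt α n * z ^ n with hFdef
  set K : ℝ → ℝ := fun z => F z * (1 - z) ^ (-α) with hKdef
  have hKderiv : ∀ t ∈ Set.Icc (0:ℝ) x, HasDerivAt K 0 t := by
    intro t ht
    obtain ⟨ht0, htx⟩ := ht
    have habs : |t| < 1 := by rw [abs_of_nonneg ht0]; linarith
    have h1t : (0:ℝ) < 1 - t := by linarith
    have hF' := hasDerivAt_F hα1 hα2 habs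
    have hr : HasDerivAt (fun z : ℝ => (1 - z) ^ (-α))
        ((-1) * (-α) * (1 - t) ^ (-α - 1)) t := by
      have hlin : HasDerivAt (fun z : ℝ => 1 - z) (-1) t := by
        simpa using (hasDerivAt_id t).const_sub 1
      exact hlin.rpow_const (Or.inl h1t.ne')
    have hmul := hF'.mul hr
    set D : ℝ := ∑' n : ℕ, wgt α n * ((n:ℝ) * t ^ (n - 1)) with hDdef
    have hode : (1 - t) * D = -α * F t := ode_identity hα1 hα2 habs
    have hval : D * (1 - t) ^ (-α) + F t * ((-1) * (-α) * (1 - t) ^ (-α - 1)) = 0 := by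
      have hsplit : (1 - t) ^ (-α) = (1 - t) ^ (-α - 1) * (1 - t) := by
        have h := Real.rpow_add h1t (-α - 1) 1
        rw [Real.rpow_one, show (-α - 1) + 1 = -α by ring] at h
        exact h
      rw [hsplit]
      have : D * ((1 - t) ^ (-α - 1) * (1 - t)) = ((1 - t) * D) * (1 - t) ^ (-α - 1) := by ring
      rw [this, hode]
      ring
    rw [hval] at hmul
    exact hmul
  have hcont : ContinuousOn K (Set.Icc 0 x) := fun t ht =>
    ((hKderiv t ht).continuousAt).continuousWithinAt
  have hconst := constant_of_has_deriv_right_zero hcont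
    (fun t ht => ((hKderiv t (Set.mem_Icc_of_Ico ht)).hasDerivWithinAt))
    x (Set.right_mem_Icc.mpr hx0.le)
  have hK0 : K 0 = 1 := by
    simp only [hKdef, hFdef]
    rw [F_zero]
    norm_num
  have h1x : (0:ℝ) < 1 - x := by linarith
  have hKx : F x * (1 - x) ^ (-α) = 1 := by
    have := hconst
    rw [hK0] at this
    exact this
  have hFx : F x = (1 - x) ^ α := by
    have hne : (1 - x) ^ α ≠ 0 := (Real.rpow_pos_of_pos h1x α).ne'
    rw [Real.rpow_neg h1x.le] at hKx
    field_simp at hKx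
    linarith [hKx]
  have hsum := (summable_wgt_mul_pow hα1 hα2 (by rw [abs_of_pos hx0]; exact hx1.le)).hasSum
  rwa [show (∑' n : ℕ, wgt α n * x ^ n) = (1 - x) ^ α from hFx] at hsum

lemma wgt_pascal (α : ℝ) (n : ℕ) :
    wgt α (n + 1) = wgt (α - 1) (n + 1) - wgt (α - 1) n := by
  have hprod : (∏ i ∈ Finset.range (n + 1), (α - i))
      = α * ∏ i ∈ Finset.range n, (α - 1 - i) := by
    rw [Finset.prod_range_succ']
    simp only [Nat.cast_zero, sub_zero]
    rw [mul_comm]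
    congr 1
    apply Finset.prod_congr rfl
    intro i _
    push_cast
    ring
  have hf : (Nat.factorial n : ℝ) ≠ 0 := by exact_mod_cast (Nat.factorial_pos n).ne'
  have hf1 : ((n : ℝ) + 1) ≠ 0 := by positivity
  have hprod2 : (∏ i ∈ Finset.range (n + 1), (α - 1 - i))
      = (∏ i ∈ Finset.range n, (α - 1 - i)) * (α - 1 - n) := Finset.prod_range_succ _ _
  simp only [wgt, hprod, hprod2, Nat.factorial_succ, pow_succ]
  push_cast
  field_simp
  ring

lemma wgt_partial_sum (α : ℝ) (n : ℕ) :
    ∑ m ∈ Finset.range (n + 1), wgt α m = wgt (α - 1) n := by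
  induction n with
  | zero => simp [wgt_zero]
  | succ n ih =>
      rw [Finset.sum_range_succ, ih, wgt_pascal]
      ring

lemma binom_hasSum_one {α : ℝ} (hα1 : 1 < α) (hα2 : α < 2) :
    HasSum (fun n : ℕ => wgt α n) 0 := by
  have hsum : Summable (fun n : ℕ => wgt α n) := by
    have h := summable_wgt_mul_pow (x := 1) hα1 hα2 (by norm_num)
    refine h.congr fun n => ?_
    simp
  have ht := hsum.hasSum.tendsto_sum_nat
  have h0 : Filter.Tendsto (fun n : ℕ => ∑ i ∈ Finset.range n, wgt α i)
      Filter.atTop (nhds 0) := by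
    rw [← Filter.tendsto_add_atTop_iff_nat 2]
    have hb : ∀ n : ℕ, ‖∑ i ∈ Finset.range (n + 2), wgt α i‖ ≤ (α - 1) / ((n:ℝ) + 1) := by
      intro n
      have he : (n : ℕ) + 2 = (n + 1) + 1 := by ring
      rw [he, wgt_partial_sum]
      have := wgt_abs_le_beta (β := α - 1) (by linarith) (by linarith) n
      rw [Real.norm_eq_abs]
      refine this.trans (le_of_eq ?_)
      push_cast
      ring
    refine squeeze_zero_norm hb ?_
    have h1 : Filter.Tendsto (fun n : ℕ => (α - 1) / (n:ℝ)) Filter.atTop (nhds 0) :=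
      tendsto_const_div_atTop_nhds_zero_nat (α - 1)
    have h2 := h1.comp (Filter.tendsto_add_atTop_nat 1)
    refine h2.congr fun n => ?_
    simp only [Function.comp_apply]
    push_cast
    ring_nf
  have : (∑' n : ℕ, wgt α n) = 0 := tendsto_nhds_unique ht h0
  rw [← this]
  exact hsum.hasSum

lemma binom_hasSum {α x : ℝ} (hα1 : 1 < α) (hα2 : α < 2)
    (hx0 : 0 < x) (hx1 : x ≤ 1) :
    HasSum (fun n : ℕ => wgt α n * x ^ n) ((1 - x) ^ α) := by
  rcases lt_or_eq_of_le hx1 with h | h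
  · exact binom_hasSum_lt hα1 hα2 hx0 h
  · subst h
    rw [sub_self, Real.zero_rpow (by linarith)]
    have h1 := binom_hasSum_one hα1 hα2
    have he : (fun n : ℕ => wgt α n * (1:ℝ) ^ n) = fun n : ℕ => wgt α n := by
      funext n; simp
    rw [he]
    exact h1

lemma hasSum_shift1 {f : ℕ → ℝ} {a : ℝ} (hf : HasSum f a) :
    HasSum (fun n => f (n + 1)) (a - f 0) := by
  refine (hasSum_nat_add_iff 1).mpr ?_
  convert hf using 1
  · rfl
  rw [Finset.sum_range_one]
  ring

lemma hasSum_shift2 {f : ℕ → ℝ} {a : ℝ} (hf : HasSum f a) :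
    HasSum (fun n => f (n + 2)) (a - f 0 - f 1) := by
  refine (hasSum_nat_add_iff 2).mpr ?_
  convert hf using 1
  · rfl
  rw [Finset.sum_range_succ, Finset.sum_range_one]
  ring

/-- Tempered-WSGD weights: `g_0 = γ₁ e^{hλ}`, `g_1 = γ₁ w_1 + γ₂ w_0`,
`g_k = (γ₁ w_k + γ₂ w_{k-1} + γ₃ w_{k-2}) e^{-(k-1)hλ}` for `k ≥ 2`. -/
noncomputable def gwt (α γ₁ γ₂ γ₃ h lam : ℝ) : ℕ → ℝ
  | 0 => γ₁ * Real.exp (h * lam)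
  | 1 => γ₁ * wgt α 1 + γ₂ * wgt α 0
  | (k + 2) => (γ₁ * wgt α (k + 2) + γ₂ * wgt α (k + 1) + γ₃ * wgt α k) *
      Real.exp (-(((k : ℝ) + 1) * h * lam))


theorem gwt_hasSum (α γ₁ γ₂ γ₃ h lam : ℝ)
    (hα₁ : 1 < α) (hα₂ : α < 2) (hh : 0 < h) (hlam : 0 ≤ lam) :
    HasSum (gwt α γ₁ γ₂ γ₃ h lam)
      ((γ₁ * Real.exp (h * lam) + γ₂ + γ₃ * Real.exp (-(h * lam))) *
        (1 - Real.exp (-(h * lam))) ^ α) := by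
  set x : ℝ := Real.exp (-(h * lam)) with hxdef
  have hx0 : 0 < x := Real.exp_pos _
  have hxne : x ≠ 0 := hx0.ne'
  have hx1 : x ≤ 1 := Real.exp_le_one_iff.mpr (by nlinarith)
  have hxinv : Real.exp (h * lam) = x⁻¹ := by
    rw [hxdef, Real.exp_neg, inv_inv]
  have hxn : ∀ n : ℕ, Real.exp (-(((n:ℝ) + 1) * h * lam)) = x ^ (n + 1) := by
    intro n
    rw [hxdef, ← Real.exp_nat_mul]
    congr 1
    push_cast
    ring
  set T : ℝ := (1 - x) ^ α with hTdef
  have core : HasSum (fun n : ℕ => wgt α n * x ^ n) T := binom_hasSum hα₁ hα₂ hx0 hx1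
  have A := hasSum_shift2 (core.mul_left (γ₁ * x⁻¹))
  have B := hasSum_shift1 (core.mul_left γ₂)
  have C := core.mul_left (γ₃ * x)
  have total2 := (A.add B).add C
  have hg2 : HasSum (fun n => gwt α γ₁ γ₂ γ₃ h lam (n + 2))
      ((γ₁ * x⁻¹ * T - γ₁ * x⁻¹ * (wgt α 0 * x ^ 0) - γ₁ * x⁻¹ * (wgt α 1 * x ^ 1)
        + (γ₂ * T - γ₂ * (wgt α 0 * x ^ 0))) + γ₃ * x * T) := by
    have he : (fun n => gwt α γ₁ γ₂ γ₃ h lam (n + 2))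
        = fun n => (γ₁ * x⁻¹ * (wgt α (n + 2) * x ^ (n + 2))
            + γ₂ * (wgt α (n + 1) * x ^ (n + 1)))
            + γ₃ * x * (wgt α n * x ^ n) := by
      funext n
      show (γ₁ * wgt α (n + 2) + γ₂ * wgt α (n + 1) + γ₃ * wgt α n) *
          Real.exp (-(((n : ℝ) + 1) * h * lam)) = _
      rw [hxn n, pow_succ x (n + 1), pow_succ x n]
      field_simp
    rw [he]
    exact total2
  have hfull := (hasSum_nat_add_iff 2).mp hg2
  convert hfull using 1
  · rfl
  have hsum2 : ∑ i ∈ Finset.range 2, gwt α γ₁ γ₂ γ₃ h lam i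
      = γ₁ * Real.exp (h * lam) + (γ₁ * wgt α 1 + γ₂ * wgt α 0) := by
    rw [Finset.sum_range_succ, Finset.sum_range_one]
    rfl
  rw [hsum2, hxinv, wgt_zero, wgt_one]
  field_simp
  ring
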